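/- Let M ∈ ℂ^{K×K} be Hermitian positive definite and b ∈ ℂ^K. In the complex conjugate gradient method started from x_0 with r_0 = M x_0 + b, p_0 = r_0, and updates α_k = -(p_k^H r_k)/(p_k^H M p_k), x_{k+1} = x_k + α_k p_k, r_{k+1} = r_k + α_k M p_k, β_{k+1} = -((M p_k)^H r_{k+1})/(p_k^H M p_k), p_{k+1} = r_{k+1} + β_{k+1} p_k: as long as the residuals r_0,...,r_i are nonzero, the residuals are pairwise orthogonal (r_j^H r_l = 0 for j ≠ l) and the directions are pairwise M-conjugate (p_j^H M p_l = 0 for j ≠ l). -/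

import Mathlib

open Matrix
open scoped ComplexOrder

theorem stmt_7 (K : ℕ) (M : Matrix (Fin K) (Fin K) ℂ) (hM : M.PosDef)
    (b x0 : Fin K → ℂ)
    (x r p : ℕ → (Fin K → ℂ)) (α β : ℕ → ℂ)
    (hx0 : x 0 = x0)
    (hr0 : r 0 = M.mulVec x0 + b)
    (hp0 : p 0 = r 0)
    (hα : ∀ k, α k = -(star (p k) ⬝ᵥ r k) / (star (p k) ⬝ᵥ M.mulVec (p k)))
    (hx : ∀ k, x (k + 1) = x k + α k • p k)
    (hr : ∀ k, r (k + 1) = r k + α k • M.mulVec (p k))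
    (hβ : ∀ k, β (k + 1) = -(star (M.mulVec (p k)) ⬝ᵥ r (k + 1)) / (star (p k) ⬝ᵥ M.mulVec (p k)))
    (hp : ∀ k, p (k + 1) = r (k + 1) + β (k + 1) • p k)
    (i : ℕ) (hnz : ∀ j ≤ i, r j ≠ 0) :
    (∀ j ≤ i, ∀ l ≤ i, j ≠ l → star (r j) ⬝ᵥ r l = 0) ∧
    (∀ j ≤ i, ∀ l ≤ i, j ≠ l → star (p j) ⬝ᵥ M.mulVec (p l) = 0) := by
  -- Hermitian swap lemma
  have swap : ∀ u v : Fin K → ℂ, star (M.mulVec u) ⬝ᵥ v = star u ⬝ᵥ M.mulVec v := by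
    intro u v
    rw [star_mulVec, ← dotProduct_mulVec, hM.1.eq]
  -- conjugate symmetry of dot product
  have cdot : ∀ u v : Fin K → ℂ, star (star u ⬝ᵥ v) = star v ⬝ᵥ u := by
    intro u v
    rw [star_dotProduct, star_star]
  -- conjugate symmetry of the M-form
  have cform : ∀ u v : Fin K → ℂ, star (star u ⬝ᵥ M.mulVec v) = star v ⬝ᵥ M.mulVec u := by
    intro u v
    rw [cdot, ← swap]
  have key : ∀ i : ℕ, (∀ j ≤ i, r j ≠ 0) →
      ((∀ j ≤ i, ∀ l ≤ i, j ≠ l → star (r j) ⬝ᵥ r l = 0) ∧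
       (∀ j l, l ≤ i → j < l → star (p j) ⬝ᵥ r l = 0) ∧
       (∀ j ≤ i, ∀ l ≤ i, j ≠ l → star (p j) ⬝ᵥ M.mulVec (p l) = 0) ∧
       (∀ j ≤ i, star (p j) ⬝ᵥ r j = star (r j) ⬝ᵥ r j)) := by
    intro i
    induction i with
    | zero =>
      intro _
      refine ⟨?_, ?_, ?_, ?_⟩
      · intro j hj l hl hjl; omega
      · intro j l hl hjl; omega
      · intro j hj l hl hjl; omega
      · intro j hj
        interval_cases j
        rw [hp0]
    | succ i ih =>
      intro hnz
      obtain ⟨O, C, B, D⟩ := ih (fun j hj => hnz j (Nat.le_succ_of_le hj))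
      have hrr : ∀ k ≤ i, star (r k) ⬝ᵥ r k ≠ 0 := fun k hk h =>
        hnz k (Nat.le_succ_of_le hk) (dotProduct_star_self_eq_zero.mp h)
      have hpr : ∀ k ≤ i, star (p k) ⬝ᵥ r k ≠ 0 := fun k hk => (D k hk) ▸ hrr k hk
      have hpne : ∀ k ≤ i, p k ≠ 0 := by
        intro k hk h
        exact hpr k hk (by rw [h]; simp)
      have hd : ∀ k ≤ i, star (p k) ⬝ᵥ M.mulVec (p k) ≠ 0 := fun k hk =>
        (hM.dotProduct_mulVec_pos (hpne k hk)).ne'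
      have hαd : ∀ k ≤ i, α k * (star (p k) ⬝ᵥ M.mulVec (p k)) = -(star (p k) ⬝ᵥ r k) := by
        intro k hk; rw [hα k, div_mul_cancel₀ _ (hd k hk)]
      have hαne : ∀ k ≤ i, α k ≠ 0 := by
        intro k hk
        rw [hα k]
        exact div_ne_zero (neg_ne_zero.mpr (hpr k hk)) (hd k hk)
      -- star (r k) ⬝ M p k = star (p k) ⬝ M p k
      have hrMp : ∀ k ≤ i, star (r k) ⬝ᵥ M.mulVec (p k) = star (p k) ⬝ᵥ M.mulVec (p k) := by
        intro k hk
        cases k with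
        | zero => rw [hp0]
        | succ m =>
          have hrp : r (m+1) = p (m+1) - β (m+1) • p m := by rw [hp m]; abel
          rw [hrp, star_sub, star_smul, sub_dotProduct, smul_dotProduct,
            B m (by omega) (m+1) hk (by omega), smul_zero, sub_zero]
      -- residual orthogonality against the new residual
      have Onew : ∀ j ≤ i, star (r j) ⬝ᵥ r (i+1) = 0 := by
        intro j hj
        rw [hr i, dotProduct_add, dotProduct_smul, smul_eq_mul]
        rcases eq_or_lt_of_le hj with rfl | hji
        · rw [hrMp j le_rfl, ← D j le_rfl, hαd j le_rfl]; ring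
        · rw [O j (le_of_lt hji) i le_rfl (Nat.ne_of_lt hji)]
          have hMr : star (r j) ⬝ᵥ M.mulVec (p i) = 0 := by
            rw [← cform]
            cases j with
            | zero =>
              rw [← hp0, B i le_rfl 0 (Nat.zero_le i) (by omega)]
              exact star_zero ℂ
            | succ m =>
              have hrp : r (m+1) = p (m+1) - β (m+1) • p m := by rw [hp m]; abel
              rw [hrp, mulVec_sub, mulVec_smul, dotProduct_sub, dotProduct_smul,
                B i le_rfl (m+1) (by omega) (by omega), B i le_rfl m (by omega) (by omega),
                smul_zero, sub_zero]
              exact star_zero ℂ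
          rw [hMr, mul_zero, add_zero]
      have Ofull : ∀ j ≤ i+1, ∀ l ≤ i+1, j ≠ l → star (r j) ⬝ᵥ r l = 0 := by
        intro j hj l hl hjl
        rcases eq_or_lt_of_le hl with rfl | hl'
        · exact Onew j (by omega)
        · rcases eq_or_lt_of_le hj with rfl | hj'
          · rw [← star_star (r l), star_dotProduct, star_star, Onew l (by omega)]
            exact star_zero ℂ
          · exact O j (by omega) l (by omega) hjl
      -- directions orthogonal to the new residual
      have Cnew : ∀ j ≤ i, star (p j) ⬝ᵥ r (i+1) = 0 := by
        intro j hj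
        rw [hr i, dotProduct_add, dotProduct_smul, smul_eq_mul]
        rcases eq_or_lt_of_le hj with rfl | hji
        · rw [hαd j le_rfl]; ring
        · rw [C j i le_rfl hji, B j (le_of_lt hji) i le_rfl (Nat.ne_of_lt hji),
            mul_zero, add_zero]
      have Cfull : ∀ j l, l ≤ i+1 → j < l → star (p j) ⬝ᵥ r l = 0 := by
        intro j l hl hjl
        rcases eq_or_lt_of_le hl with rfl | hl'
        · exact Cnew j (by omega)
        · exact C j l (by omega) hjl
      have Dnew : star (p (i+1)) ⬝ᵥ r (i+1) = star (r (i+1)) ⬝ᵥ r (i+1) := by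
        rw [hp i, star_add, star_smul, add_dotProduct, smul_dotProduct,
          Cnew i le_rfl, smul_zero, add_zero]
      -- new conjugacy
      have Bnew : ∀ j ≤ i, star (p (i+1)) ⬝ᵥ M.mulVec (p j) = 0 := by
        intro j hj
        rw [hp i, star_add, star_smul, add_dotProduct, smul_dotProduct, smul_eq_mul]
        rcases eq_or_lt_of_le hj with rfl | hji
        · have hb : star (β (j+1)) * (star (p j) ⬝ᵥ M.mulVec (p j))
              = -(star (r (j+1)) ⬝ᵥ M.mulVec (p j)) := by
            have hdr : star (star (p j) ⬝ᵥ M.mulVec (p j)) = star (p j) ⬝ᵥ M.mulVec (p j) :=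
              cform (p j) (p j)
            rw [hβ j, star_div₀, star_neg, hdr, div_mul_cancel₀ _ (hd j le_rfl)]
            rw [swap, cform]
          rw [hb]; ring
        · rw [B i le_rfl j (le_of_lt hji) (by omega), mul_zero, add_zero]
          have hMp : M.mulVec (p j) = (α j)⁻¹ • (r (j+1) - r j) := by
            rw [hr j, add_sub_cancel_left, smul_smul,
              inv_mul_cancel₀ (hαne j (le_of_lt hji)), one_smul]
          rw [hMp, dotProduct_smul, dotProduct_sub,
            Ofull (i+1) le_rfl (j+1) (by omega) (by omega),
            Ofull (i+1) le_rfl j (by omega) (by omega), sub_zero, smul_zero]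
      have Bfull : ∀ j ≤ i+1, ∀ l ≤ i+1, j ≠ l → star (p j) ⬝ᵥ M.mulVec (p l) = 0 := by
        intro j hj l hl hjl
        rcases eq_or_lt_of_le hj with hj' | hj'
        · subst hj'
          exact Bnew l (by omega)
        · rcases eq_or_lt_of_le hl with hl' | hl'
          · subst hl'
            rw [← star_star (star (p j) ⬝ᵥ M.mulVec (p (i+1))), cform, Bnew j (by omega)]
            exact star_zero ℂ
          · exact B j (by omega) l (by omega) hjl
      have Dfull : ∀ j ≤ i+1, star (p j) ⬝ᵥ r j = star (r j) ⬝ᵥ r j := by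
        intro j hj
        rcases eq_or_lt_of_le hj with rfl | hj'
        · exact Dnew
        · exact D j (by omega)
      exact ⟨Ofull, Cfull, Bfull, Dfull⟩
  obtain ⟨O, _, B, _⟩ := key i hnz
  exact ⟨O, B⟩
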